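/- arXiv:0907.2370 — 3 statements merged into one kernel-verified Lean document; each statement's English description precedes it below -/
import Mathlib

section
/- Let φ be an inner function with φ(0) = 0 and h ∈ H² with ⟨h, h·φ^n⟩ = 0 for all n ≥ 1. Then for every w ∈ 𝔻, ‖h/(1 − conj(w)·φ)‖₂² = ‖h‖₂² / (1 − |w|²). -/
open Complex Metric Filter MeasureTheory intervalIntegral
open scoped Topology

lemma alg0 (c z c' z' : ℂ) (hzz : z * z' = 1) (hb : 1 - c * z ≠ 0)
    (hb' : 1 - c' * z' ≠ 0) :
    (1 - c * z) * (1 - c' * z') *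
      (1 + (c * z / (1 - c * z) + c' * z' / (1 - c' * z'))) = 1 - c * c' := by
  calc (1 - c * z) * (1 - c' * z') *
      (1 + (c * z / (1 - c * z) + c' * z' / (1 - c' * z')))
      = (1 - c * z) * (1 - c' * z') + c * z * (1 - c' * z') + c' * z' * (1 - c * z) := by
        field_simp; ring
    _ = 1 - c * c' * (z * z') := by ring
    _ = 1 - c * c' := by rw [hzz, mul_one]

lemma denom_ne (w z : ℂ) (hw : ‖w‖ < 1) (hz : ‖z‖ = 1) :
    (1 : ℂ) - (starRingEnd ℂ) w * z ≠ 0 := by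
  intro hEq
  rw [sub_eq_zero] at hEq
  have h1 : ‖(starRingEnd ℂ) w * z‖ < 1 := by
    rw [norm_mul, hz, mul_one, RCLike.norm_conj]; exact hw
  rw [← hEq] at h1; simp at h1

lemma key_alg (w z : ℂ) (hw : ‖w‖ < 1) (hz : ‖z‖ = 1) :
    ‖(1:ℂ) - (starRingEnd ℂ) w * z‖ ^ 2 *
      (1 + 2 * (((starRingEnd ℂ) w * z) / (1 - (starRingEnd ℂ) w * z)).re)
      = 1 - ‖w‖ ^ 2 := by
  set c := (starRingEnd ℂ) w with hc
  have hb : (1 : ℂ) - c * z ≠ 0 := denom_ne w z hw hz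
  have hb' : (1 : ℂ) - (starRingEnd ℂ) c * (starRingEnd ℂ) z ≠ 0 := by
    intro hEq
    apply hb
    have := congrArg (starRingEnd ℂ) hEq
    simpa using this
  have hzz : z * (starRingEnd ℂ) z = 1 := by
    rw [Complex.mul_conj']
    norm_cast; rw [hz]; norm_num
  have hcc : c * (starRingEnd ℂ) c = ((‖w‖ ^ 2 : ℝ) : ℂ) := by
    rw [Complex.mul_conj']
    norm_cast; rw [hc, RCLike.norm_conj]
  have hC : (((‖(1:ℂ) - c * z‖ ^ 2 : ℝ)) : ℂ) *
      (1 + ((c * z) / (1 - c * z) + (starRingEnd ℂ) ((c * z) / (1 - c * z))))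
      = 1 - ((‖w‖ ^ 2 : ℝ) : ℂ) := by
    push_cast
    rw [← Complex.mul_conj']
    simp only [map_div₀, map_sub, map_mul, map_one]
    rw [alg0 c z ((starRingEnd ℂ) c) ((starRingEnd ℂ) z) hzz hb hb', hcc]
    push_cast
    ring
  have h2re : (c * z) / (1 - c * z) + (starRingEnd ℂ) ((c * z) / (1 - c * z))
      = ((2 * ((c * z) / (1 - c * z)).re : ℝ) : ℂ) := by
    rw [Complex.add_conj]
  rw [h2re] at hC
  have : ((‖(1:ℂ) - c * z‖ ^ 2 * (1 + 2 * ((c * z) / (1 - c * z)).re) : ℝ) : ℂ)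
      = ((1 - ‖w‖ ^ 2 : ℝ) : ℂ) := by
    push_cast
    push_cast at hC
    linear_combination hC
  exact_mod_cast this

/-- Let `φ` be inner with `φ 0 = 0` (boundary values `Φ` of modulus `1` a.e.) and
`h ∈ H²` (boundary values `hb`) with `⟨h, h φ^n⟩ = 0` for all `n ≥ 1`. Then for every
`w ∈ 𝔻`, `‖h/(1 - conj w · φ)‖₂² = ‖h‖₂²/(1 - |w|²)` (norms computed on the boundary). -/
theorem stmt4 (φ h : ℂ → ℂ)
    (hφd : DifferentiableOn ℂ φ (ball (0:ℂ) 1))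
    (hφmaps : Set.MapsTo φ (ball (0:ℂ) 1) (ball (0:ℂ) 1))
    (hφ0 : φ 0 = 0)
    (hhd : DifferentiableOn ℂ h (ball (0:ℂ) 1))
    (Φ hb : ℝ → ℂ) (hΦmeas : Measurable Φ) (hbmeas : Measurable hb)
    (hΦlim : ∀ᵐ θ : ℝ ∂(volume.restrict (Set.Ioc (0:ℝ) (2*Real.pi))),
      Tendsto (fun r : ℝ => φ (r * Complex.exp ((θ : ℂ) * Complex.I))) (𝓝[<] 1) (𝓝 (Φ θ)))
    (hblim : ∀ᵐ θ : ℝ ∂(volume.restrict (Set.Ioc (0:ℝ) (2*Real.pi))),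
      Tendsto (fun r : ℝ => h (r * Complex.exp ((θ : ℂ) * Complex.I))) (𝓝[<] 1) (𝓝 (hb θ)))
    (hΦmod : ∀ᵐ θ : ℝ ∂(volume.restrict (Set.Ioc (0:ℝ) (2*Real.pi))), ‖Φ θ‖ = 1)
    (hbL2 : IntegrableOn (fun θ => ‖hb θ‖ ^ 2) (Set.Ioc (0:ℝ) (2*Real.pi)))
    (horth : ∀ n : ℕ, 1 ≤ n →
      ∫ θ in (0:ℝ)..(2*Real.pi), hb θ * (starRingEnd ℂ) (hb θ * Φ θ ^ n) = 0) :
    ∀ w ∈ ball (0:ℂ) 1,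
      ∫ θ in (0:ℝ)..(2*Real.pi), ‖hb θ / (1 - (starRingEnd ℂ) w * Φ θ)‖ ^ 2
        = (∫ θ in (0:ℝ)..(2*Real.pi), ‖hb θ‖ ^ 2) / (1 - ‖w‖ ^ 2) := by
  intro w hw
  rw [mem_ball, dist_zero_right] at hw
  set μ := volume.restrict (Set.Ioc (0:ℝ) (2*Real.pi)) with hμ
  set c := (starRingEnd ℂ) w with hcdef
  have hc : ‖c‖ = ‖w‖ := RCLike.norm_conj w
  have h2π : (0:ℝ) ≤ 2*Real.pi := by positivity
  have hr2 : (0:ℝ) < 1 - ‖w‖ ^ 2 := by nlinarith [norm_nonneg w]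
  have hr1 : (0:ℝ) < 1 - ‖w‖ := by linarith
  -- F : boundary modulus squared
  set F : ℝ → ℝ := fun θ => ‖hb θ‖ ^ 2 with hFdef
  have hF : Integrable F μ := hbL2
  -- g
  set g : ℝ → ℂ := fun θ => (c * Φ θ) / (1 - c * Φ θ) with hgdef
  have hgmeas : Measurable g := ((measurable_const.mul hΦmeas)).div
    (measurable_const.sub (measurable_const.mul hΦmeas))
  -- a.e. basic facts
  have hgbound : ∀ᵐ θ ∂μ, ‖g θ‖ ≤ ‖w‖ / (1 - ‖w‖) := by
    filter_upwards [hΦmod] with θ hΦθ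
    have hnum : ‖c * Φ θ‖ = ‖w‖ := by rw [norm_mul, hΦθ, mul_one, hc]
    have hden : 1 - ‖w‖ ≤ ‖1 - c * Φ θ‖ := by
      calc 1 - ‖w‖ = ‖(1:ℂ)‖ - ‖c * Φ θ‖ := by rw [hnum, norm_one]
        _ ≤ ‖1 - c * Φ θ‖ := norm_sub_norm_le _ _
    rw [hgdef]
    simp only [norm_div]
    rw [hnum]
    exact div_le_div_of_nonneg_left (norm_nonneg w) hr1 hden
  -- measurability of the complex product
  have hFmeas : Measurable F := (hbmeas.norm.pow_const 2)
  have hFCmeas : Measurable (fun θ => ((F θ : ℝ) : ℂ)) :=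
    Complex.measurable_ofReal.comp hFmeas
  have hFg_meas : AEStronglyMeasurable (fun θ => ((F θ : ℝ) : ℂ) * g θ) μ :=
    (hFCmeas.mul hgmeas).aestronglyMeasurable
  -- integrability of F * g
  have hFg_int : Integrable (fun θ => ((F θ : ℝ) : ℂ) * g θ) μ := by
    apply Integrable.mono' (hF.const_mul (‖w‖ / (1 - ‖w‖))) hFg_meas
    filter_upwards [hgbound] with θ hbd
    rw [norm_mul, Complex.norm_real, Real.norm_of_nonneg (by positivity)]
    calc F θ * ‖g θ‖ ≤ F θ * (‖w‖ / (1 - ‖w‖)) := by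
          apply mul_le_mul_of_nonneg_left hbd (by positivity)
      _ = ‖w‖ / (1 - ‖w‖) * F θ := by ring
  -- each moment of Φ against |hb|² vanishes
  have hzero : ∀ m : ℕ, 1 ≤ m → ∫ θ, ((F θ : ℝ) : ℂ) * Φ θ ^ m ∂μ = 0 := by
    intro m hm
    have h0 := horth m hm
    rw [intervalIntegral.integral_of_le h2π] at h0
    have hre : (fun θ => hb θ * (starRingEnd ℂ) (hb θ * Φ θ ^ m))
        = fun θ => ((F θ : ℝ) : ℂ) * ((starRingEnd ℂ) (Φ θ)) ^ m := by
      funext θ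
      rw [map_mul, map_pow]
      calc hb θ * ((starRingEnd ℂ) (hb θ) * (starRingEnd ℂ) (Φ θ) ^ m)
          = (hb θ * (starRingEnd ℂ) (hb θ)) * (starRingEnd ℂ) (Φ θ) ^ m := by ring
        _ = ((F θ : ℝ) : ℂ) * (starRingEnd ℂ) (Φ θ) ^ m := by
            rw [Complex.mul_conj']; norm_cast
    rw [hre] at h0
    have hconj : (fun θ => ((F θ : ℝ) : ℂ) * Φ θ ^ m)
        = fun θ => (starRingEnd ℂ) (((F θ : ℝ) : ℂ) * ((starRingEnd ℂ) (Φ θ)) ^ m) := by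
      funext θ
      rw [map_mul, map_pow, Complex.conj_conj, Complex.conj_ofReal]
    rw [hconj, integral_conj, h0, map_zero]
  -- each term integral vanishes
  have hInt0 : ∀ n : ℕ, ∫ θ, ((F θ : ℝ) : ℂ) * (c * Φ θ) ^ (n+1) ∂μ = 0 := by
    intro n
    have : (fun θ => ((F θ : ℝ) : ℂ) * (c * Φ θ) ^ (n+1))
        = fun θ => c ^ (n+1) * (((F θ : ℝ) : ℂ) * Φ θ ^ (n+1)) := by
      funext θ; rw [mul_pow]; ring
    rw [this, MeasureTheory.integral_const_mul, hzero (n+1) (Nat.le_add_left 1 n), mul_zero]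
  -- term integrability and norm summability
  have hterm_int : ∀ n : ℕ,
      Integrable (fun θ => ((F θ : ℝ) : ℂ) * (c * Φ θ) ^ (n+1)) μ := by
    intro n
    apply Integrable.mono' (hF.const_mul (‖w‖ ^ (n+1)))
      ((hFCmeas.mul ((measurable_const.mul hΦmeas).pow_const _)).aestronglyMeasurable)
    filter_upwards [hΦmod] with θ hΦθ
    show ‖((F θ : ℝ) : ℂ) * (c * Φ θ) ^ (n+1)‖ ≤ _
    rw [norm_mul, Complex.norm_real, Real.norm_of_nonneg (by positivity),
      norm_pow, norm_mul, hΦθ, mul_one, hc]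
    ring_nf
    exact le_of_eq (by ring)
  have hnorm_eq : ∀ n : ℕ, (∫ θ, ‖((F θ : ℝ) : ℂ) * (c * Φ θ) ^ (n+1)‖ ∂μ)
      = ‖w‖ ^ (n+1) * ∫ θ, F θ ∂μ := by
    intro n
    rw [show (‖w‖ ^ (n+1) * ∫ θ, F θ ∂μ) = ∫ θ, ‖w‖ ^ (n+1) * F θ ∂μ from (MeasureTheory.integral_const_mul _ _).symm]
    apply MeasureTheory.integral_congr_ae
    filter_upwards [hΦmod] with θ hΦθ
    rw [norm_mul, Complex.norm_real, Real.norm_of_nonneg (by positivity),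
      norm_pow, norm_mul, hΦθ, mul_one, hc]
    ring
  have hsummable : Summable (fun n : ℕ =>
      ∫ θ, ‖((F θ : ℝ) : ℂ) * (c * Φ θ) ^ (n+1)‖ ∂μ) := by
    apply Summable.congr _ (fun n => (hnorm_eq n).symm)
    have : Summable (fun n : ℕ => ‖w‖ ^ n) :=
      summable_geometric_of_lt_one (norm_nonneg w) hw
    simpa [pow_succ, mul_comm, mul_assoc] using ((this.mul_right (∫ θ, F θ ∂μ)).mul_left ‖w‖)
  -- the series identity a.e.
  have hsum_eq : ∀ᵐ θ ∂μ,
      (∑' n : ℕ, ((F θ : ℝ) : ℂ) * (c * Φ θ) ^ (n+1)) = ((F θ : ℝ) : ℂ) * g θ := by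
    filter_upwards [hΦmod] with θ hΦθ
    have hlt : ‖c * Φ θ‖ < 1 := by rw [norm_mul, hΦθ, mul_one, hc]; exact hw
    have hgeo := tsum_geometric_of_norm_lt_one hlt
    calc (∑' n : ℕ, ((F θ : ℝ) : ℂ) * (c * Φ θ) ^ (n+1))
        = ∑' n : ℕ, (((F θ : ℝ) : ℂ) * (c * Φ θ)) * (c * Φ θ) ^ n := by
          congr 1; funext n; rw [pow_succ]; ring
      _ = (((F θ : ℝ) : ℂ) * (c * Φ θ)) * ∑' n : ℕ, (c * Φ θ) ^ n := tsum_mul_left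
      _ = ((F θ : ℝ) : ℂ) * ((c * Φ θ) * (1 - c * Φ θ)⁻¹) := by rw [hgeo]; ring
      _ = ((F θ : ℝ) : ℂ) * g θ := by simp only [hgdef, div_eq_mul_inv]
  -- the complex integral vanishes
  have hCint : ∫ θ, ((F θ : ℝ) : ℂ) * g θ ∂μ = 0 := by
    rw [← MeasureTheory.integral_congr_ae hsum_eq,
      ← integral_tsum_of_summable_integral_norm hterm_int hsummable]
    simp [hInt0]
  -- the real cross term vanishes
  have hRe_int : Integrable (fun θ => F θ * (g θ).re) μ := by
    apply Integrable.mono' (hF.const_mul (‖w‖ / (1 - ‖w‖)))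
      ((hFmeas.mul (Complex.measurable_re.comp hgmeas)).aestronglyMeasurable)
    filter_upwards [hgbound] with θ hbd
    have hre_le : |(g θ).re| ≤ ‖g θ‖ := by
      exact Complex.abs_re_le_norm _
    show ‖F θ * (g θ).re‖ ≤ _
    rw [Real.norm_eq_abs, abs_mul, _root_.abs_of_nonneg (by positivity)]
    calc F θ * |(g θ).re| ≤ F θ * ‖g θ‖ := by
          apply mul_le_mul_of_nonneg_left hre_le (by positivity)
      _ ≤ F θ * (‖w‖ / (1 - ‖w‖)) :=
          mul_le_mul_of_nonneg_left hbd (by positivity)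
      _ = ‖w‖ / (1 - ‖w‖) * F θ := by ring
  have hRe : ∫ θ, F θ * (g θ).re ∂μ = 0 := by
    have h1 : (fun θ => F θ * (g θ).re)
        = fun θ => (((F θ : ℝ) : ℂ) * g θ).re := by
      funext θ; rw [Complex.re_ofReal_mul]
    rw [h1]
    have := integral_re (𝕜 := ℂ) hFg_int
    simp only [RCLike.re_to_complex] at this
    rw [this, hCint, Complex.zero_re]
  -- pointwise identity
  have hptwise : ∀ᵐ θ ∂μ, ‖hb θ / (1 - c * Φ θ)‖ ^ 2
      = (F θ + 2 * (F θ * (g θ).re)) / (1 - ‖w‖ ^ 2) := by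
    filter_upwards [hΦmod] with θ hΦθ
    have hkey := key_alg w (Φ θ) hw hΦθ
    have hbne : ‖(1:ℂ) - (starRingEnd ℂ) w * Φ θ‖ ≠ 0 :=
      norm_ne_zero_iff.mpr (denom_ne w (Φ θ) hw hΦθ)
    simp only [hgdef, hFdef, hcdef]
    rw [norm_div, div_pow, eq_div_iff (ne_of_gt hr2), div_mul_eq_mul_div,
      eq_comm, eq_div_iff (pow_ne_zero 2 hbne)]
    linear_combination (‖hb θ‖ ^ 2) * hkey
  -- put everything together
  rw [intervalIntegral.integral_of_le h2π, intervalIntegral.integral_of_le h2π, ← hμ]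
  rw [MeasureTheory.integral_congr_ae hptwise, MeasureTheory.integral_div]
  congr 1
  rw [integral_add hF (hRe_int.const_mul 2), MeasureTheory.integral_const_mul, hRe]
  simp [hFdef]
end

section
/- Let φ(z) = 1 − √(1−z) and h(z) = (1−z)^{-3/8} and f(z) = (1−z)^{-1/4} on the unit disc (principal branches). Then h ∈ H², f ∈ H², h·(f∘φ) equals (1−z)^{-1/2}, and (1−z)^{-1/2} ∉ H². Hence the weighted composition operator W_{h,φ} does not map H² into H². -/
open Complex Metric MeasureTheory

/-- The set of integral means `(2π)⁻¹ ∫₀^{2π} ‖g(r e^{iθ})‖² dθ`, `0 ≤ r < 1`. -/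
noncomputable def hardyMeans (g : ℂ → ℂ) : Set ℝ :=
  {x | ∃ r : ℝ, 0 ≤ r ∧ r < 1 ∧
    x = (2 * Real.pi)⁻¹ *
      ∫ θ in (0:ℝ)..(2 * Real.pi), ‖g (r * Complex.exp ((θ : ℂ) * Complex.I))‖ ^ 2}

/-- Membership in the Hardy space `H²` of the unit disc. -/
def MemHardy2 (g : ℂ → ℂ) : Prop :=
  DifferentiableOn ℂ g (ball (0:ℂ) 1) ∧ BddAbove (hardyMeans g)

private lemma aux_normSq (r θ : ℝ) :
    ‖1 - (r:ℂ) * Complex.exp ((θ:ℂ) * Complex.I)‖ ^ 2 = 1 - 2*r*Real.cos θ + r^2 := by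
  rw [Complex.sq_norm, Complex.normSq_apply]
  simp only [Complex.sub_re, Complex.sub_im, Complex.one_re, Complex.one_im,
    Complex.mul_re, Complex.mul_im, Complex.ofReal_re, Complex.ofReal_im,
    Complex.exp_ofReal_mul_I_re, Complex.exp_ofReal_mul_I_im]
  nlinarith [Real.sin_sq_add_cos_sq θ]

private lemma aux_slit {r : ℝ} (θ : ℝ) (hr0 : 0 ≤ r) (hr1 : r < 1) :
    (1 - (r:ℂ) * Complex.exp ((θ:ℂ) * Complex.I)) ∈ Complex.slitPlane := by
  rw [Complex.mem_slitPlane_iff]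
  left
  simp only [Complex.sub_re, Complex.one_re, Complex.mul_re, Complex.ofReal_re,
    Complex.ofReal_im, Complex.exp_ofReal_mul_I_re, Complex.exp_ofReal_mul_I_im]
  have h1 := Real.neg_one_le_cos θ
  have h2 := Real.cos_le_one θ
  nlinarith

private lemma aux_norm_pos {r : ℝ} (θ : ℝ) (hr0 : 0 ≤ r) (hr1 : r < 1) :
    0 < ‖1 - (r:ℂ) * Complex.exp ((θ:ℂ) * Complex.I)‖ :=
  norm_pos_iff.mpr (Complex.slitPlane_ne_zero (aux_slit θ hr0 hr1))

private lemma aux_norm_cpow (b : ℝ) {z : ℂ} (hz : z ≠ 0) :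
    ‖z ^ ((-b : ℝ) : ℂ)‖ ^ 2 = ‖z‖ ^ (-(2*b)) := by
  have h0 : 0 < ‖z‖ := norm_pos_iff.mpr hz
  rw [Complex.norm_cpow_real, ← Real.rpow_natCast (‖z‖ ^ (-b)) 2,
    ← Real.rpow_mul h0.le]
  norm_num
  ring_nf

private lemma aux_lower {r θ : ℝ} (hr0 : 0 ≤ r) (hr1 : r ≤ 1)
    (hθ : θ ∈ Set.Icc 0 (2*Real.pi)) :
    min θ (2*Real.pi - θ) / Real.pi ≤ ‖1 - (r:ℂ) * Complex.exp ((θ:ℂ) * Complex.I)‖ := by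
  obtain ⟨hθ0, hθ2⟩ := hθ
  have hsq := aux_normSq r θ
  have hπ := Real.pi_pos
  have hπ2 : (0:ℝ) < Real.pi^2 := by positivity
  set N := ‖1 - (r:ℂ) * Complex.exp ((θ:ℂ) * Complex.I)‖ with hN
  have hnn : 0 ≤ N := norm_nonneg _
  set m := min θ (2*Real.pi - θ) with hm
  have hminnn : 0 ≤ m := le_min hθ0 (by linarith)
  -- step 1 : 2 m² ≤ π² (1 - cos θ)
  have hd : 2 * m^2 ≤ Real.pi^2 * (1 - Real.cos θ) := by
    rcases le_total θ Real.pi with h | h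
    · have h' : 2 / Real.pi^2 * θ^2 ≤ 1 - Real.cos θ := by
        linarith [Real.cos_le_one_sub_mul_cos_sq (x := θ)
          (by rw [_root_.abs_of_nonneg hθ0]; exact h)]
      have hmin : m ≤ θ := min_le_left _ _
      have hm2 : m^2 ≤ θ^2 := by nlinarith
      calc 2 * m^2 ≤ 2 * θ^2 := by linarith
        _ = (2 / Real.pi^2 * θ^2) * Real.pi^2 := by field_simp
        _ ≤ (1 - Real.cos θ) * Real.pi^2 := mul_le_mul_of_nonneg_right h' hπ2.le
        _ = Real.pi^2 * (1 - Real.cos θ) := by ring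
    · have hc : Real.cos θ = Real.cos (2*Real.pi - θ) := (Real.cos_two_pi_sub θ).symm
      have h' : 2 / Real.pi^2 * (2*Real.pi - θ)^2 ≤ 1 - Real.cos θ := by
        rw [hc]
        linarith [Real.cos_le_one_sub_mul_cos_sq (x := 2*Real.pi - θ)
          (by rw [_root_.abs_of_nonneg (by linarith)]; linarith)]
      have hmin : m ≤ 2*Real.pi - θ := min_le_right _ _
      have hm2 : m^2 ≤ (2*Real.pi - θ)^2 := by nlinarith
      calc 2 * m^2 ≤ 2 * (2*Real.pi - θ)^2 := by linarith
        _ = (2 / Real.pi^2 * (2*Real.pi - θ)^2) * Real.pi^2 := by field_simp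
        _ ≤ (1 - Real.cos θ) * Real.pi^2 := mul_le_mul_of_nonneg_right h' hπ2.le
        _ = Real.pi^2 * (1 - Real.cos θ) := by ring
  -- step 2 : (1 - cos θ)/2 ≤ N²
  have hstep : (1 - Real.cos θ)/2 ≤ N^2 := by
    rcases le_total (1/4 : ℝ) r with h | h
    · nlinarith [Real.cos_le_one θ]
    · nlinarith [Real.cos_le_one θ, Real.neg_one_le_cos θ]
  have hkey : (m / Real.pi)^2 ≤ N^2 := by
    rw [div_pow, div_le_iff₀ hπ2]
    have h3 := mul_le_mul_of_nonneg_left hstep hπ2.le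
    linarith
  have := Real.sqrt_le_sqrt hkey
  rwa [Real.sqrt_sq (by positivity), Real.sqrt_sq hnn] at this

private lemma aux_upper {r θ : ℝ} (hr0 : 0 ≤ r) (hr1 : r ≤ 1) (hθ0 : 0 ≤ θ) :
    ‖1 - (r:ℂ) * Complex.exp ((θ:ℂ) * Complex.I)‖ ≤ (1 - r) + θ := by
  have hsq := aux_normSq r θ
  set N := ‖1 - (r:ℂ) * Complex.exp ((θ:ℂ) * Complex.I)‖ with hN
  have hnn : 0 ≤ N := norm_nonneg _
  have hcos := Real.one_sub_sq_div_two_le_cos (x := θ)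
  have hkey : N^2 ≤ ((1 - r) + θ)^2 := by nlinarith
  have := Real.sqrt_le_sqrt hkey
  rwa [Real.sqrt_sq hnn, Real.sqrt_sq (by linarith)] at this

private lemma aux_cont (r : ℝ) (c : ℂ) (hr0 : 0 ≤ r) (hr1 : r < 1) :
    Continuous fun θ : ℝ => ‖(1 - (r:ℂ) * Complex.exp ((θ:ℂ) * Complex.I)) ^ c‖ ^ 2 := by
  have h1 : Continuous fun θ : ℝ => 1 - (r:ℂ) * Complex.exp ((θ:ℂ) * Complex.I) := by
    continuity
  have h2 : Continuous fun θ : ℝ => (1 - (r:ℂ) * Complex.exp ((θ:ℂ) * Complex.I)) ^ c := by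
    refine continuous_iff_continuousAt.mpr fun θ => ?_
    exact ContinuousAt.comp (x := θ)
      (continuousAt_cpow_const (a := 1 - (r:ℂ) * Complex.exp ((θ:ℂ) * Complex.I)) (b := c)
        (aux_slit θ hr0 hr1)) h1.continuousAt
  exact (h2.norm).pow 2

private lemma aux_bdd (b : ℝ) (hb0 : 0 < b) (hb : b < 1/2) :
    BddAbove (hardyMeans (fun z => (1 - z) ^ ((-b : ℝ) : ℂ))) := by
  have hπ := Real.pi_pos
  set g : ℝ → ℝ := fun θ =>
    Real.pi ^ (2*b) * (θ ^ (-(2*b)) + (2*Real.pi - θ) ^ (-(2*b))) with hg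
  have hgint : IntervalIntegrable g volume 0 (2*Real.pi) := by
    apply IntervalIntegrable.const_mul
    apply IntervalIntegrable.add
    · exact intervalIntegral.intervalIntegrable_rpow' (by linarith)
    · have h := (intervalIntegral.intervalIntegrable_rpow' (r := -(2*b))
        (a := 0) (b := 2*Real.pi) (by linarith)).comp_sub_left (2*Real.pi)
      simpa using h.symm
  refine ⟨(2*Real.pi)⁻¹ * ∫ θ in (0:ℝ)..(2*Real.pi), g θ, ?_⟩
  rintro x ⟨r, hr0, hr1, rfl⟩
  have hfint : IntervalIntegrable
      (fun θ : ℝ => ‖(1 - (r:ℂ) * Complex.exp ((θ:ℂ) * Complex.I)) ^ ((-b:ℝ):ℂ)‖ ^ 2)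
      volume 0 (2*Real.pi) := (aux_cont r _ hr0 hr1).intervalIntegrable _ _
  have hmono : (∫ θ in (0:ℝ)..(2*Real.pi),
        ‖(1 - (r:ℂ) * Complex.exp ((θ:ℂ) * Complex.I)) ^ ((-b:ℝ):ℂ)‖ ^ 2)
      ≤ ∫ θ in (0:ℝ)..(2*Real.pi), g θ := by
    apply intervalIntegral.integral_mono_ae_restrict (by linarith) hfint hgint
    have hnull : ∀ᵐ θ : ℝ ∂volume, θ ∉ ({0, 2*Real.pi} : Set ℝ) := by
      have : volume ({0, 2*Real.pi} : Set ℝ) = 0 :=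
        (Set.Finite.insert _ (Set.finite_singleton _)).measure_zero _
      exact measure_eq_zero_iff_ae_notMem.mp this
    filter_upwards [ae_restrict_mem measurableSet_Icc, ae_restrict_of_ae hnull]
      with θ h1 h2
    have hθ : θ ∈ Set.Ioo 0 (2*Real.pi) := by
      rcases h1 with ⟨ha, hb'⟩
      refine ⟨lt_of_le_of_ne ha ?_, lt_of_le_of_ne hb' ?_⟩
      · exact fun h => h2 (by simp [← h])
      · exact fun h => h2 (by simp [h])
    -- pointwise bound
    have hne : (1 - (r:ℂ) * Complex.exp ((θ:ℂ) * Complex.I)) ≠ 0 :=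
      Complex.slitPlane_ne_zero (aux_slit θ hr0 hr1)
    rw [aux_norm_cpow b hne]
    set N := ‖1 - (r:ℂ) * Complex.exp ((θ:ℂ) * Complex.I)‖ with hN
    set m := min θ (2*Real.pi - θ) with hm
    have hm0 : 0 < m := lt_min hθ.1 (by linarith [hθ.2])
    have hlow : m / Real.pi ≤ N := aux_lower hr0 hr1.le ⟨hθ.1.le, hθ.2.le⟩
    have h1' : N ^ (-(2*b)) ≤ (m / Real.pi) ^ (-(2*b)) :=
      Real.rpow_le_rpow_of_nonpos (by positivity) hlow (by linarith)
    have h2' : (m / Real.pi) ^ (-(2*b)) = Real.pi ^ (2*b) * m ^ (-(2*b)) := by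
      rw [Real.div_rpow hm0.le hπ.le, Real.rpow_neg hπ.le]
      field_simp
    have h3' : m ^ (-(2*b)) ≤ θ ^ (-(2*b)) + (2*Real.pi - θ) ^ (-(2*b)) := by
      rcases min_cases θ (2*Real.pi - θ) with ⟨he, _⟩ | ⟨he, _⟩ <;> rw [← hm] at he
      · rw [he]
        have : (0:ℝ) ≤ (2*Real.pi - θ) ^ (-(2*b)) := Real.rpow_nonneg (by linarith [hθ.2]) _
        linarith
      · rw [he]
        have : (0:ℝ) ≤ θ ^ (-(2*b)) := Real.rpow_nonneg hθ.1.le _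
        linarith
    calc N ^ (-(2*b)) ≤ Real.pi ^ (2*b) * m ^ (-(2*b)) := by rw [← h2']; exact h1'
      _ ≤ g θ := by
          rw [hg]
          exact mul_le_mul_of_nonneg_left h3' (Real.rpow_nonneg hπ.le _)
  have h2π : (0:ℝ) < (2*Real.pi)⁻¹ := by positivity
  exact mul_le_mul_of_nonneg_left hmono h2π.le

private lemma aux_diff (c : ℂ) : DifferentiableOn ℂ (fun z => (1 - z) ^ c) (ball (0:ℂ) 1) := by
  intro z hz
  apply DifferentiableAt.differentiableWithinAt
  apply DifferentiableAt.cpow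
  · exact (differentiable_const (1:ℂ)).differentiableAt.sub differentiable_id.differentiableAt
  · exact differentiableAt_const c
  · rw [Complex.mem_slitPlane_iff]
    left
    rw [mem_ball_zero_iff] at hz
    have h1 : z.re ≤ ‖z‖ := Complex.re_le_norm z
    simp only [Complex.sub_re, Complex.one_re]
    linarith

private lemma aux_ball {r : ℝ} (θ : ℝ) (hr0 : 0 ≤ r) (hr1 : r < 1) :
    (r:ℂ) * Complex.exp ((θ:ℂ) * Complex.I) ∈ ball (0:ℂ) 1 := by
  rw [mem_ball_zero_iff, norm_mul,
    Complex.norm_exp_ofReal_mul_I, Complex.norm_real, Real.norm_eq_abs, _root_.abs_of_nonneg hr0]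
  simpa using hr1

private lemma memHardy2_congr {g g' : ℂ → ℂ} (h : ∀ z ∈ ball (0:ℂ) 1, g z = g' z)
    (hg : MemHardy2 g) : MemHardy2 g' := by
  obtain ⟨hd, hb⟩ := hg
  constructor
  · exact hd.congr fun z hz => (h z hz).symm
  · have hs : hardyMeans g' = hardyMeans g := by
      unfold hardyMeans
      ext x
      constructor <;> rintro ⟨r, h0, h1, rfl⟩ <;> refine ⟨r, h0, h1, ?_⟩ <;>
        [skip; skip] <;>
      · congr 1
        apply intervalIntegral.integral_congr
        intro θ _
        simp only [h _ (aux_ball θ h0 h1)]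
    rw [hs]
    exact hb

private lemma aux_unbdd :
    ¬ BddAbove (hardyMeans (fun z => (1 - z) ^ ((-(1/2:ℝ) : ℝ) : ℂ))) := by
  rintro ⟨M, hM⟩
  have hπ := Real.pi_pos
  set ε := Real.exp (-(2*Real.pi)*(|M|+1)) with hε
  have hε0 : 0 < ε := Real.exp_pos _
  have hε1 : ε < 1 := by
    rw [hε, Real.exp_lt_one_iff]
    have : 0 ≤ |M| := abs_nonneg M
    nlinarith
  set r := 1 - ε with hr
  have hr0 : 0 ≤ r := by rw [hr]; linarith
  have hr1 : r < 1 := by rw [hr]; linarith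
  set f : ℝ → ℝ :=
    fun θ => ‖(1 - (r:ℂ) * Complex.exp ((θ:ℂ) * Complex.I)) ^ ((-(1/2:ℝ) : ℝ) : ℂ)‖ ^ 2 with hf
  have hmem : (2*Real.pi)⁻¹ * (∫ θ in (0:ℝ)..(2*Real.pi), f θ) ∈
      hardyMeans (fun z => (1 - z) ^ ((-(1/2:ℝ) : ℝ) : ℂ)) := ⟨r, hr0, hr1, rfl⟩
  have hle := hM hmem
  -- lower bound the integral
  have hcont : Continuous f := aux_cont r _ hr0 hr1
  have hint1 : IntervalIntegrable f volume 0 Real.pi := hcont.intervalIntegrable _ _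
  have hint2 : IntervalIntegrable f volume Real.pi (2*Real.pi) := hcont.intervalIntegrable _ _
  have hsplit : (∫ θ in (0:ℝ)..(2*Real.pi), f θ)
      = (∫ θ in (0:ℝ)..Real.pi, f θ) + ∫ θ in Real.pi..(2*Real.pi), f θ :=
    (intervalIntegral.integral_add_adjacent_intervals hint1 hint2).symm
  have hpos2 : 0 ≤ ∫ θ in Real.pi..(2*Real.pi), f θ :=
    intervalIntegral.integral_nonneg (by linarith) (fun θ _ => by positivity)
  have hintg : IntervalIntegrable (fun θ : ℝ => (ε + θ)⁻¹) volume 0 Real.pi := by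
    apply ContinuousOn.intervalIntegrable
    apply ContinuousOn.inv₀
    · fun_prop
    · intro θ hθ
      rw [Set.uIcc_of_le (by linarith)] at hθ
      have := hθ.1
      positivity
  have hmono : (∫ θ in (0:ℝ)..Real.pi, (ε + θ)⁻¹) ≤ ∫ θ in (0:ℝ)..Real.pi, f θ := by
    apply intervalIntegral.integral_mono_on (by linarith) hintg hint1
    intro θ hθ
    have hne : (1 - (r:ℂ) * Complex.exp ((θ:ℂ) * Complex.I)) ≠ 0 :=
      Complex.slitPlane_ne_zero (aux_slit θ hr0 hr1)
    show (ε + θ)⁻¹ ≤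
      ‖(1 - (r:ℂ) * Complex.exp ((θ:ℂ) * Complex.I)) ^ ((-(1/2:ℝ) : ℝ) : ℂ)‖ ^ 2
    rw [aux_norm_cpow (1/2 : ℝ) hne]
    have h2 : -(2*(1/2 : ℝ)) = (-1 : ℝ) := by norm_num
    rw [h2, Real.rpow_neg_one]
    have hup : ‖1 - (r:ℂ) * Complex.exp ((θ:ℂ) * Complex.I)‖ ≤ ε + θ := by
      have := aux_upper (θ := θ) hr0 hr1.le hθ.1
      rw [hr] at this ⊢
      linarith
    exact inv_anti₀ (aux_norm_pos θ hr0 hr1) hup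
  have hcalc : (∫ θ in (0:ℝ)..Real.pi, (ε + θ)⁻¹)
      = Real.log (ε + Real.pi) - Real.log ε := by
    rw [intervalIntegral.integral_comp_add_left (fun x : ℝ => x⁻¹) ε]
    rw [add_zero]
    rw [integral_inv (by
      rw [Set.uIcc_of_le (by linarith)]
      rintro ⟨h1, h2⟩
      linarith)]
    rw [Real.log_div (by positivity) (by positivity)]
  have hlog1 : (0:ℝ) ≤ Real.log (ε + Real.pi) := by
    apply Real.log_nonneg
    have := Real.pi_gt_three
    linarith
  have hlog2 : Real.log ε = -(2*Real.pi)*(|M|+1) := Real.log_exp _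
  have hbig : |M| + 1 ≤ (2*Real.pi)⁻¹ * (∫ θ in (0:ℝ)..(2*Real.pi), f θ) := by
    rw [hsplit]
    have h1 : Real.log (ε + Real.pi) - Real.log ε ≤
        (∫ θ in (0:ℝ)..Real.pi, f θ) + ∫ θ in Real.pi..(2*Real.pi), f θ := by
      rw [← hcalc]; linarith
    have h2 : (2*Real.pi) * (|M|+1) ≤ Real.log (ε + Real.pi) - Real.log ε := by
      rw [hlog2]; linarith
    calc |M| + 1 = (2*Real.pi)⁻¹ * ((2*Real.pi) * (|M|+1)) := by field_simp
      _ ≤ _ := by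
          apply mul_le_mul_of_nonneg_left _ (by positivity)
          linarith
  have := le_abs_self M
  linarith

private lemma aux_id {z : ℂ} (hz : z ∈ ball (0:ℂ) 1) :
    (1 - z) ^ (-(3:ℂ)/8) * (1 - (1 - (1 - z) ^ ((1:ℂ)/2))) ^ (-(1:ℂ)/4)
      = (1 - z) ^ (-(1:ℂ)/2) := by
  set w := 1 - z with hw
  have hre : 0 < w.re := by
    rw [mem_ball_zero_iff] at hz
    have h1 : z.re ≤ ‖z‖ := Complex.re_le_norm z
    rw [hw]
    simp only [Complex.sub_re, Complex.one_re]
    linarith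
  have hw0 : w ≠ 0 := by
    intro h
    rw [h] at hre
    simp at hre
  have h1 : 1 - (1 - w ^ ((1:ℂ)/2)) = w ^ ((1:ℂ)/2) := by ring
  rw [h1]
  have harg : |Complex.arg w| < Real.pi / 2 :=
    Complex.abs_arg_lt_pi_div_two_iff.mpr (Or.inl hre)
  have hπ := Real.pi_pos
  have him : (Complex.log w * ((1:ℂ)/2)).im = Complex.arg w / 2 := by
    have : ((1:ℂ)/2) = ((1/2 : ℝ) : ℂ) := by norm_num
    rw [this, Complex.mul_im]
    simp [Complex.log_im]
    ring
  have habs := abs_lt.mp harg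
  have hmul := Complex.cpow_mul (x := w) (y := (1:ℂ)/2) (-(1:ℂ)/4)
    (by rw [him]; linarith) (by rw [him]; linarith)
  have hexp : ((1:ℂ)/2) * (-(1:ℂ)/4) = -(1:ℂ)/8 := by norm_num
  rw [hexp] at hmul
  rw [← hmul]
  rw [← Complex.cpow_add _ _ hw0]
  norm_num

/-- With `φ(z) = 1 - √(1-z)`, `h(z) = (1-z)^{-3/8}` and `f(z) = (1-z)^{-1/4}` (principal
branches): `h ∈ H²`, `f ∈ H²`, `h·(f∘φ) = (1-z)^{-1/2}` on `𝔻`, and `(1-z)^{-1/2} ∉ H²`;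
hence `W_{h,φ}` does not map `H²` into `H²`. -/
theorem stmt8 :
    MemHardy2 (fun z => (1 - z) ^ (-(3:ℂ)/8)) ∧
    MemHardy2 (fun z => (1 - z) ^ (-(1:ℂ)/4)) ∧
    (∀ z ∈ ball (0:ℂ) 1,
      (1 - z) ^ (-(3:ℂ)/8) * (1 - (1 - (1 - z) ^ ((1:ℂ)/2))) ^ (-(1:ℂ)/4)
        = (1 - z) ^ (-(1:ℂ)/2)) ∧
    ¬ MemHardy2 (fun z => (1 - z) ^ (-(1:ℂ)/2)) ∧
    ¬ MemHardy2 (fun z =>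
        (1 - z) ^ (-(3:ℂ)/8) * (1 - (1 - (1 - z) ^ ((1:ℂ)/2))) ^ (-(1:ℂ)/4)) := by
  have hfun1 : (fun z : ℂ => (1 - z) ^ (-(3:ℂ)/8))
      = fun z => (1 - z) ^ ((-(3/8:ℝ) : ℝ) : ℂ) := by
    funext z; norm_num
  have hfun2 : (fun z : ℂ => (1 - z) ^ (-(1:ℂ)/4))
      = fun z => (1 - z) ^ ((-(1/4:ℝ) : ℝ) : ℂ) := by
    funext z; norm_num
  have hfun3 : (fun z : ℂ => (1 - z) ^ (-(1:ℂ)/2))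
      = fun z => (1 - z) ^ ((-(1/2:ℝ) : ℝ) : ℂ) := by
    funext z; norm_num
  have hnot : ¬ MemHardy2 (fun z => (1 - z) ^ (-(1:ℂ)/2)) := by
    rintro ⟨-, hb⟩
    rw [hfun3] at hb
    exact aux_unbdd hb
  refine ⟨⟨aux_diff _, ?_⟩, ⟨aux_diff _, ?_⟩, fun z hz => aux_id hz, hnot, ?_⟩
  · rw [hfun1]
    exact aux_bdd (3/8) (by norm_num) (by norm_num)
  · rw [hfun2]
    exact aux_bdd (1/4) (by norm_num) (by norm_num)
  · intro hmem
    exact hnot (memHardy2_congr (fun z hz => aux_id hz) hmem)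
end

section
/- Suppose φ : 𝔻 → 𝔻 is holomorphic with bounded C_φ on H², and h ∈ H² satisfies: for every ε > 0 there is δ > 0 with |h| ≤ ε a.e. on {ζ ∈ 𝕋 : |φ(ζ)| ≥ 1−δ}. Then ‖(1−|w|²)^{1/2} h/(1 − conj(w)φ)‖₂ → 0 as |w| → 1⁻. -/
open Complex Metric Filter MeasureTheory
open scoped Topology

set_option maxHeartbeats 1000000

/-- Harper's compactness criterion for `W_{h,φ}`: if `φ : 𝔻 → 𝔻` is holomorphic with
boundary values `Φ`, `C_φ` is bounded on `H²` (via the normalized-kernel bound `Cn`),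
`h ∈ H²` has square-integrable boundary values `hb`, and for every `ε > 0` there is
`δ > 0` with `|hb| ≤ ε` a.e. on `{|Φ| ≥ 1-δ}`, then
`‖(1-|w|²)^{1/2} h/(1-conj w·φ)‖₂² → 0` as `|w| → 1⁻` (computed on the boundary). -/
theorem stmt14 (φ h : ℂ → ℂ)
    (hφd : DifferentiableOn ℂ φ (ball (0:ℂ) 1))
    (hφmaps : Set.MapsTo φ (ball (0:ℂ) 1) (ball (0:ℂ) 1))
    (hhd : DifferentiableOn ℂ h (ball (0:ℂ) 1))
    (Φ hb : ℝ → ℂ) (hΦmeas : Measurable Φ) (hbmeas : Measurable hb)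
    (hΦlim : ∀ᵐ θ : ℝ ∂(volume.restrict (Set.Ioc (0:ℝ) (2*Real.pi))),
      Tendsto (fun r : ℝ => φ (r * Complex.exp ((θ : ℂ) * Complex.I))) (𝓝[<] 1) (𝓝 (Φ θ)))
    (hblim : ∀ᵐ θ : ℝ ∂(volume.restrict (Set.Ioc (0:ℝ) (2*Real.pi))),
      Tendsto (fun r : ℝ => h (r * Complex.exp ((θ : ℂ) * Complex.I))) (𝓝[<] 1) (𝓝 (hb θ)))
    (hΦle : ∀ᵐ θ : ℝ ∂(volume.restrict (Set.Ioc (0:ℝ) (2*Real.pi))), ‖Φ θ‖ ≤ 1)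
    (hbL2 : IntegrableOn (fun θ => ‖hb θ‖ ^ 2) (Set.Ioc (0:ℝ) (2*Real.pi)))
    (Cn : ℝ) (hCn0 : 0 ≤ Cn)
    (hCn : ∀ w ∈ ball (0:ℂ) 1,
      (2 * Real.pi)⁻¹ * ∫ θ in (0:ℝ)..(2*Real.pi),
          (1 - ‖w‖ ^ 2) / ‖1 - (starRingEnd ℂ) w * Φ θ‖ ^ 2 ≤ Cn ^ 2)
    (hsmall : ∀ ε : ℝ, 0 < ε → ∃ δ : ℝ, 0 < δ ∧
      ∀ᵐ θ : ℝ ∂(volume.restrict (Set.Ioc (0:ℝ) (2*Real.pi))),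
        1 - δ ≤ ‖Φ θ‖ → ‖hb θ‖ ≤ ε) :
    Tendsto (fun w : ℂ =>
        (2 * Real.pi)⁻¹ * ∫ θ in (0:ℝ)..(2*Real.pi),
          (1 - ‖w‖ ^ 2) * ‖hb θ‖ ^ 2 / ‖1 - (starRingEnd ℂ) w * Φ θ‖ ^ 2)
      (Filter.comap (fun w : ℂ => ‖w‖) (𝓝[<] (1:ℝ))) (𝓝 0) := by
  rw [Metric.tendsto_nhds]
  intro ε' hε'
  set ε : ℝ := Real.sqrt (ε' / (2 * (Cn ^ 2 + 1))) with hεdef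
  have hεpos : 0 < ε := Real.sqrt_pos.2 (by positivity)
  have hεsq : ε ^ 2 = ε' / (2 * (Cn ^ 2 + 1)) := Real.sq_sqrt (by positivity)
  obtain ⟨δ, hδpos, hδae⟩ := hsmall ε hεpos
  set M : ℝ := ∫ θ in Set.Ioc (0:ℝ) (2*Real.pi), ‖hb θ‖ ^ 2 with hMdef
  have hM0 : 0 ≤ M := integral_nonneg (fun θ => by positivity)
  set K : ℝ := (2*Real.pi)⁻¹ * M / δ ^ 2 with hKdef
  have hK0 : 0 ≤ K := div_nonneg (mul_nonneg (by positivity) hM0) (by positivity)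
  set η : ℝ := ε' / (4 * (K + 1)) with hηdef
  have hηpos : 0 < η := div_pos hε' (by linarith)
  rw [eventually_comap]
  have hmem : Set.Ioo (1 - η) 1 ∈ 𝓝[<] (1:ℝ) :=
    Ioo_mem_nhdsLT_of_mem ⟨by linarith, le_refl 1⟩
  filter_upwards [hmem] with r hr w hw
  have hw1 : ‖w‖ < 1 := hw ▸ hr.2
  have hw2 : 1 - η < ‖w‖ := hw ▸ hr.1
  have hw0 : 0 ≤ ‖w‖ := norm_nonneg w
  have hden : ∀ θ : ℝ, 1 - ‖w‖ * ‖Φ θ‖ ≤ ‖1 - (starRingEnd ℂ) w * Φ θ‖ := by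
    intro θ
    have := norm_sub_norm_le (1:ℂ) ((starRingEnd ℂ) w * Φ θ)
    simpa [norm_mul, RCLike.norm_conj] using this
  set f : ℝ → ℝ := fun θ => (1 - ‖w‖ ^ 2) * ‖hb θ‖ ^ 2 / ‖1 - (starRingEnd ℂ) w * Φ θ‖ ^ 2
    with hfdef
  set g : ℝ → ℝ := fun θ => (1 - ‖w‖ ^ 2) / ‖1 - (starRingEnd ℂ) w * Φ θ‖ ^ 2 with hgdef
  have hgm : Measurable g :=
    Measurable.div measurable_const
      (((measurable_const.sub (measurable_const.mul hΦmeas)).norm).pow measurable_const)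
  have hfm : Measurable f :=
    Measurable.div (measurable_const.mul ((hbmeas.norm).pow measurable_const))
      (((measurable_const.sub (measurable_const.mul hΦmeas)).norm).pow measurable_const)
  have hwpos : (0:ℝ) < 1 - ‖w‖ := by linarith
  have hnum : (0:ℝ) ≤ 1 - ‖w‖ ^ 2 := by nlinarith
  have hDw : ∀ θ : ℝ, ‖Φ θ‖ ≤ 1 → 1 - ‖w‖ ≤ ‖1 - (starRingEnd ℂ) w * Φ θ‖ := by
    intro θ hΦ1
    refine le_trans ?_ (hden θ)
    nlinarith [norm_nonneg (Φ θ)]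
  have hf_int : IntegrableOn f (Set.Ioc (0:ℝ) (2*Real.pi)) := by
    apply Integrable.mono' (hbL2.const_mul ((1 - ‖w‖ ^ 2) / (1 - ‖w‖) ^ 2))
      hfm.aestronglyMeasurable
    filter_upwards [hΦle] with θ hΦ1
    have hD := hDw θ hΦ1
    have hf0 : 0 ≤ f θ := div_nonneg (mul_nonneg hnum (by positivity)) (by positivity)
    rw [Real.norm_of_nonneg hf0]
    have hstep : f θ ≤ (1 - ‖w‖ ^ 2) * ‖hb θ‖ ^ 2 / (1 - ‖w‖) ^ 2 :=
      div_le_div_of_nonneg_left (mul_nonneg hnum (by positivity)) (by positivity)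
        (pow_le_pow_left₀ hwpos.le hD 2)
    calc f θ ≤ (1 - ‖w‖ ^ 2) * ‖hb θ‖ ^ 2 / (1 - ‖w‖) ^ 2 := hstep
      _ = (1 - ‖w‖ ^ 2) / (1 - ‖w‖) ^ 2 * ‖hb θ‖ ^ 2 := by ring
  have hconst : IntegrableOn (fun _ : ℝ => (1 - ‖w‖ ^ 2) / (1 - ‖w‖) ^ 2)
      (Set.Ioc (0:ℝ) (2*Real.pi)) := by
    exact integrableOn_const measure_Ioc_lt_top.ne enorm_ne_top
  have hg_int : IntegrableOn g (Set.Ioc (0:ℝ) (2*Real.pi)) := by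
    apply Integrable.mono' hconst hgm.aestronglyMeasurable
    filter_upwards [hΦle] with θ hΦ1
    have hD := hDw θ hΦ1
    have hg0 : 0 ≤ g θ := div_nonneg hnum (by positivity)
    rw [Real.norm_of_nonneg hg0]
    exact div_le_div_of_nonneg_left hnum (by positivity) (pow_le_pow_left₀ hwpos.le hD 2)
  have hptwise : ∀ᵐ θ ∂(volume.restrict (Set.Ioc (0:ℝ) (2*Real.pi))),
      f θ ≤ ε ^ 2 * g θ + (1 - ‖w‖ ^ 2) / δ ^ 2 * ‖hb θ‖ ^ 2 := by
    filter_upwards [hΦle, hδae] with θ h1 h2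
    rcases le_or_gt (1 - δ) ‖Φ θ‖ with hcase | hcase
    · have hhb : ‖hb θ‖ ≤ ε := h2 hcase
      have hg0 : 0 ≤ g θ := div_nonneg hnum (by positivity)
      have key : f θ ≤ ε ^ 2 * g θ := by
        have hfeq : f θ = ‖hb θ‖ ^ 2 * g θ := by simp only [hfdef, hgdef]; ring
        rw [hfeq]
        exact mul_le_mul_of_nonneg_right (pow_le_pow_left₀ (norm_nonneg _) hhb 2) hg0
      have hrest : 0 ≤ (1 - ‖w‖ ^ 2) / δ ^ 2 * ‖hb θ‖ ^ 2 :=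
        mul_nonneg (div_nonneg hnum (by positivity)) (by positivity)
      linarith
    · have hδD : δ ≤ ‖1 - (starRingEnd ℂ) w * Φ θ‖ := by
        refine le_trans ?_ (hden θ)
        nlinarith [norm_nonneg (Φ θ), mul_le_of_le_one_left (norm_nonneg (Φ θ)) hw1.le]
      have key : f θ ≤ (1 - ‖w‖ ^ 2) / δ ^ 2 * ‖hb θ‖ ^ 2 := by
        have hstep : f θ ≤ (1 - ‖w‖ ^ 2) * ‖hb θ‖ ^ 2 / δ ^ 2 :=
          div_le_div_of_nonneg_left (mul_nonneg hnum (by positivity)) (by positivity)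
            (pow_le_pow_left₀ hδpos.le hδD 2)
        calc f θ ≤ (1 - ‖w‖ ^ 2) * ‖hb θ‖ ^ 2 / δ ^ 2 := hstep
          _ = (1 - ‖w‖ ^ 2) / δ ^ 2 * ‖hb θ‖ ^ 2 := by ring
      have hg0 : 0 ≤ ε ^ 2 * g θ :=
        mul_nonneg (by positivity) (div_nonneg hnum (by positivity))
      linarith
  -- integrate the bound
  have hint_le : ∫ θ in Set.Ioc (0:ℝ) (2*Real.pi), f θ ≤
      ε ^ 2 * (∫ θ in Set.Ioc (0:ℝ) (2*Real.pi), g θ) + (1 - ‖w‖ ^ 2) / δ ^ 2 * M := by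
    have := integral_mono_ae hf_int ((hg_int.const_mul (ε ^ 2)).add
      (hbL2.const_mul ((1 - ‖w‖ ^ 2) / δ ^ 2))) hptwise
    simp only [Pi.add_apply] at this
    rw [integral_add (hg_int.const_mul (ε ^ 2)) (hbL2.const_mul _),
      integral_const_mul, integral_const_mul] at this
    exact this
  have hπ : (0:ℝ) < 2 * Real.pi := by positivity
  have hG_le : ∫ θ in Set.Ioc (0:ℝ) (2*Real.pi), g θ ≤ 2 * Real.pi * Cn ^ 2 := by
    have h1 := hCn w (by simpa [mem_ball, dist_eq_norm] using hw1)
    rw [intervalIntegral.integral_of_le hπ.le] at h1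
    calc ∫ θ in Set.Ioc (0:ℝ) (2*Real.pi), g θ
        = 2 * Real.pi * ((2 * Real.pi)⁻¹ * ∫ θ in Set.Ioc (0:ℝ) (2*Real.pi), g θ) :=
          (mul_inv_cancel_left₀ (ne_of_gt hπ) _).symm
      _ ≤ 2 * Real.pi * Cn ^ 2 := by
          apply mul_le_mul_of_nonneg_left _ hπ.le
          exact h1
  have hI0 : 0 ≤ (2 * Real.pi)⁻¹ * ∫ θ in (0:ℝ)..(2*Real.pi),
      (1 - ‖w‖ ^ 2) * ‖hb θ‖ ^ 2 / ‖1 - (starRingEnd ℂ) w * Φ θ‖ ^ 2 := by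
    apply mul_nonneg (by positivity)
    apply intervalIntegral.integral_nonneg hπ.le
    intro θ _
    exact div_nonneg (mul_nonneg hnum (by positivity)) (by positivity)
  rw [Real.dist_eq, sub_zero, _root_.abs_of_nonneg hI0]
  rw [intervalIntegral.integral_of_le hπ.le]
  have hchain : (2 * Real.pi)⁻¹ * ∫ θ in Set.Ioc (0:ℝ) (2*Real.pi), f θ ≤
      ε ^ 2 * Cn ^ 2 + (1 - ‖w‖ ^ 2) * K := by
    calc (2 * Real.pi)⁻¹ * ∫ θ in Set.Ioc (0:ℝ) (2*Real.pi), f θ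
        ≤ (2 * Real.pi)⁻¹ * (ε ^ 2 * (2 * Real.pi * Cn ^ 2) + (1 - ‖w‖ ^ 2) / δ ^ 2 * M) := by
          apply mul_le_mul_of_nonneg_left _ (by positivity)
          refine le_trans hint_le ?_
          have h3 : ε ^ 2 * (∫ θ in Set.Ioc (0:ℝ) (2*Real.pi), g θ) ≤ ε ^ 2 * (2 * Real.pi * Cn ^ 2) :=
            mul_le_mul_of_nonneg_left hG_le (by positivity)
          exact add_le_add h3 le_rfl
      _ = ε ^ 2 * Cn ^ 2 + (1 - ‖w‖ ^ 2) * K := by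
          rw [hKdef]
          have hδne : δ ≠ 0 := hδpos.ne'
          have hπne : (2 * Real.pi) ≠ 0 := hπ.ne'
          field_simp
  have h1 : ε ^ 2 * Cn ^ 2 < ε' / 2 := by
    rw [hεsq]
    have hA1 : ε' / (2 * (Cn ^ 2 + 1)) * (2 * (Cn ^ 2 + 1)) = ε' := by field_simp
    have hA0 : 0 < ε' / (2 * (Cn ^ 2 + 1)) := by positivity
    nlinarith [hA0, hA1]
  have h2 : (1 - ‖w‖ ^ 2) * K < ε' / 2 := by
    have hb1 : 1 - ‖w‖ ^ 2 ≤ 2 * (1 - ‖w‖) := by nlinarith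
    have hb2 : 1 - ‖w‖ < η := by linarith
    have : (1 - ‖w‖ ^ 2) * K ≤ 2 * η * K := by
      apply mul_le_mul_of_nonneg_right _ hK0
      linarith
    have hηK : 2 * η * K < ε' / 2 := by
      have hK1 : η * (4 * (K + 1)) = ε' := by
        rw [hηdef]; field_simp
      nlinarith [hηpos]
    linarith
  calc (2 * Real.pi)⁻¹ * ∫ θ in Set.Ioc (0:ℝ) (2*Real.pi), f θ
      ≤ ε ^ 2 * Cn ^ 2 + (1 - ‖w‖ ^ 2) * K := hchain
    _ < ε' := by linarith
end
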